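/- Fix α ∈ (0, 1) and equip ℝ with the snowflake distance d_α(x, y) = |x − y|^α. For every point p ∈ ℝ, the pointed space ((ℝ, d_α), 0) is a tangent of (ℝ, d_α) at p, and every proper tangent (Y, y) of (ℝ, d_α) at p is pointed isometric to ((ℝ, d_α), 0); i.e., the snowflaked real line has a unique tangent at every point, equal to itself. -/

import Mathlib

open Metric Filter MeasureTheory

universe u v w

/-- `BallsGHClose l x y R ε` asserts that the Gromov–Hausdorff distance between the closed
ball of radius `R` centered at `x` in the rescaled space `(X, l·d)` (which, as a set, is the
closed ball of radius `R / l` around `x` in `X`, carrying the distance `l · d`) and the closed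
ball of radius `R` centered at `y` in `Y` is less than `ε`: following the definition of the
Gromov–Hausdorff distance, there are isometric copies of the two balls inside a common metric
space `Z` whose Hausdorff distance in `Z` is `< ε`. -/
def BallsGHClose {X : Type u} {Y : Type v} [MetricSpace X] [MetricSpace Y]
    (l : ℝ) (x : X) (y : Y) (R ε : ℝ) : Prop :=
  ∃ (Z : Type (max u v)) (_ : MetricSpace Z) (f : X → Z) (g : Y → Z),
    (∀ a ∈ closedBall x (R / l), ∀ b ∈ closedBall x (R / l),
      dist (f a) (f b) = l * dist a b) ∧
    (∀ a ∈ closedBall y R, ∀ b ∈ closedBall y R, dist (g a) (g b) = dist a b) ∧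
    hausdorffDist (f '' closedBall x (R / l)) (g '' closedBall y R) < ε

/-- `(Y, y)` is a tangent (blow-up) of `X` at `x`: there is a sequence `λ_j → ∞` of positive
reals such that, for every `R > 0`, the Gromov–Hausdorff distance between the closed ball of
radius `R` centered at `x` in `(X, λ_j · d)` and the closed ball of radius `R` centered at `y`
in `Y` tends to `0` as `j → ∞`. -/
def IsTangentAt {X : Type u} [MetricSpace X] (x : X)
    (Y : Type v) [MetricSpace Y] (y : Y) : Prop :=
  ∃ lam : ℕ → ℝ, (∀ j, 0 < lam j) ∧ Tendsto lam atTop atTop ∧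
    ∀ R > (0 : ℝ), ∀ ε > (0 : ℝ), ∀ᶠ j in atTop, BallsGHClose (lam j) x y R ε

/-- Two pointed metric spaces `(Y, y)` and `(Y', y')` are pointed isometric if there is a
surjective isometry `f : Y → Y'` with `f y = y'`. -/
def PointedIsometric {Y : Type v} {Y' : Type w} [MetricSpace Y] [MetricSpace Y']
    (y : Y) (y' : Y') : Prop :=
  ∃ f : Y → Y', Isometry f ∧ Function.Surjective f ∧ f y = y'

/-- A doubling measure: a nonzero Radon measure (on a proper metric space, Radon means Borel
and finite on compact sets) such that `μ(B(x, 2r)) ≤ C · μ(B(x, r))` for some constant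
`C > 0`, every center `x` and every radius `r > 0`. -/
def IsDoublingMeasure {X : Type u} [MetricSpace X] [MeasurableSpace X]
    (μ : Measure X) : Prop :=
  μ ≠ 0 ∧ (∀ K : Set X, IsCompact K → μ K ≠ ⊤) ∧
    ∃ C : NNReal, 0 < C ∧ ∀ (x : X) (r : ℝ), 0 < r →
      μ (closedBall x (2 * r)) ≤ (C : ENNReal) * μ (closedBall x r)

/-- A metric space is geodesic if any two points `x, y` are joined by an isometric embedding
of the real interval `[0, dist x y]`. -/
def IsGeodesicSpace (X : Type u) [MetricSpace X] : Prop :=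
  ∀ x y : X, ∃ γ : ℝ → X, γ 0 = x ∧ γ (dist x y) = y ∧
    ∀ s ∈ Set.Icc 0 (dist x y), ∀ t ∈ Set.Icc 0 (dist x y), dist (γ s) (γ t) = |s - t|

/-- Type synonym for `ℝ` carrying the snowflake metric `d_α(x, y) = |x − y| ^ α`. -/
def Snowflake (_α : ℝ) : Type := ℝ

/-- The identification of `Snowflake α` with `ℝ`. -/
def Snowflake.toReal {α : ℝ} (x : Snowflake α) : ℝ := x

/-- The identification of `ℝ` with `Snowflake α`. -/
def Snowflake.ofReal (α : ℝ) (x : ℝ) : Snowflake α := x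

/-- The snowflake metric `d_α(x, y) = |x − y| ^ α` on `ℝ`, for `0 < α < 1`. -/
noncomputable def snowflakeMetricSpace (α : ℝ) (h0 : 0 < α) (h1 : α < 1) :
    MetricSpace (Snowflake α) where
  dist x y := |x.toReal - y.toReal| ^ α
  dist_self x := by
    simp [Real.zero_rpow h0.ne']
  dist_comm x y := by
    simp [abs_sub_comm x.toReal y.toReal]
  dist_triangle x y z := by
    have key : ∀ u v : ℝ, 0 ≤ u → 0 ≤ v → (u + v) ^ α ≤ u ^ α + v ^ α := by
      intro u v hu hv
      have h := NNReal.rpow_add_le_add_rpow u.toNNReal v.toNNReal h0.le h1.le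
      have h' := NNReal.coe_le_coe.2 h
      simpa [NNReal.coe_rpow, Real.coe_toNNReal _ hu, Real.coe_toNNReal _ hv] using h'
    calc |x.toReal - z.toReal| ^ α
        ≤ (|x.toReal - y.toReal| + |y.toReal - z.toReal|) ^ α := by
          exact Real.rpow_le_rpow (abs_nonneg _) (abs_sub_le _ _ _) h0.le
      _ ≤ |x.toReal - y.toReal| ^ α + |y.toReal - z.toReal| ^ α :=
          key _ _ (abs_nonneg _) (abs_nonneg _)
  eq_of_dist_eq_zero {x y} h := by
    have hxy : |x.toReal - y.toReal| = 0 := by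
      by_contra hne
      have habs : 0 < |x.toReal - y.toReal| :=
        lt_of_le_of_ne (abs_nonneg _) (Ne.symm hne)
      exact absurd h (ne_of_gt (Real.rpow_pos_of_pos habs α))
    have : x.toReal = y.toReal := by
      have := abs_eq_zero.1 hxy
      linarith [sub_eq_zero.1 this]
    exact this

/-- Rigidity of distance-preserving maps on a real interval. -/
private lemma rigid_interval {l : ℝ} (hl : 0 ≤ l) (u : ℝ → ℝ)
    (hu : ∀ s ∈ Set.Icc (-l) l, ∀ t ∈ Set.Icc (-l) l, |u s - u t| = |s - t|) :
    (∀ t ∈ Set.Icc (-l) l, u t = u 0 + t) ∨ (∀ t ∈ Set.Icc (-l) l, u t = u 0 - t) := by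
  have h0 : (0:ℝ) ∈ Set.Icc (-l) l := ⟨by linarith, hl⟩
  have hml : -l ∈ Set.Icc (-l) l := ⟨le_rfl, by linarith⟩
  have hpl : l ∈ Set.Icc (-l) l := ⟨by linarith, le_rfl⟩
  have hAB : |u l - u (-l)| = 2 * l := by
    rw [hu l hpl (-l) hml, sub_neg_eq_add, abs_of_nonneg (by linarith)]; ring
  rcases (abs_eq (by linarith : (0:ℝ) ≤ 2 * l)).1 hAB with hc | hc
  · left
    have key : ∀ t ∈ Set.Icc (-l) l, u t = u (-l) + (t + l) := by
      intro t ht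
      have h1 : |u t - u (-l)| = t + l := by
        rw [hu t ht (-l) hml, sub_neg_eq_add, abs_of_nonneg (by linarith [ht.1])]
      have h2 : |u t - u l| = l - t := by
        rw [hu t ht l hpl, abs_of_nonpos (by linarith [ht.2])]; ring
      rcases (abs_eq (by linarith [ht.1] : (0:ℝ) ≤ t + l)).1 h1 with h | h
      · linarith
      · have h3 : u t - u l = -(t + 3 * l) := by linarith
        rw [h3, abs_neg, abs_of_nonneg (by linarith [ht.1])] at h2
        have ht' : t = -l := by linarith
        rw [ht'] at h ⊢; linarith
    intro t ht
    have := key t ht; have h0' := key 0 h0; linarith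
  · right
    have key : ∀ t ∈ Set.Icc (-l) l, u t = u (-l) - (t + l) := by
      intro t ht
      have h1 : |u t - u (-l)| = t + l := by
        rw [hu t ht (-l) hml, sub_neg_eq_add, abs_of_nonneg (by linarith [ht.1])]
      have h2 : |u t - u l| = l - t := by
        rw [hu t ht l hpl, abs_of_nonpos (by linarith [ht.2])]; ring
      rcases (abs_eq (by linarith [ht.1] : (0:ℝ) ≤ t + l)).1 h1 with h | h
      · have h3 : u t - u l = t + 3 * l := by linarith
        rw [h3, abs_of_nonneg (by linarith [ht.1])] at h2
        have ht' : t = -l := by linarith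
        rw [ht'] at h ⊢; linarith
      · linarith
    intro t ht
    have := key t ht; have h0' := key 0 h0; linarith

/-- If two nonempty compact metric spaces admit, for every `ε > 0`, isometric embeddings into a
common metric space with Hausdorff distance of the images less than `ε`, then they are
isometric. -/
private lemma isometryEquiv_of_ghclose {A : Type u} {B : Type v} [MetricSpace A] [MetricSpace B]
    [CompactSpace A] [CompactSpace B] [Nonempty A] [Nonempty B]
    (h : ∀ ε > (0:ℝ), ∃ (Z : Type w) (_ : MetricSpace Z) (f : A → Z) (g : B → Z),
      Isometry f ∧ Isometry g ∧ hausdorffDist (Set.range f) (Set.range g) < ε) :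
    Nonempty (A ≃ᵢ B) := by
  have hle : ∀ ε > (0:ℝ), GromovHausdorff.ghDist A B < ε := by
    intro ε hε
    obtain ⟨Z, _, f, g, hf, hg, hH⟩ := h ε hε
    exact lt_of_le_of_lt (GromovHausdorff.ghDist_le_hausdorffDist hf hg) hH
  have h1 : GromovHausdorff.ghDist A B ≤ 0 := by
    by_contra hpos
    push_neg at hpos
    exact absurd (hle _ hpos) (lt_irrefl _)
  have h2 : dist (GromovHausdorff.toGHSpace A) (GromovHausdorff.toGHSpace B) ≤ 0 := h1
  exact GromovHausdorff.toGHSpace_eq_toGHSpace_iff_isometryEquiv.1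
    (eq_of_dist_eq_zero (le_antisymm h2 dist_nonneg))

/-- Gluing lemma: if every closed ball around `y` of radius `R > 0`, with the de-snowflaked
distance `dist ^ β`, is isometric to the interval `[-R^β, R^β]`, then there is a global
de-snowflaked coordinate `Φ : Y → ℝ` with `Φ y = 0`. -/
private lemma snow_glue {Y : Type v} [MetricSpace Y] (y : Y) (β : ℝ) (hβ : 0 < β)
    (H : ∀ R > (0:ℝ), ∃ ψ : Y → ℝ,
      (∀ a ∈ closedBall y R, ∀ b ∈ closedBall y R, |ψ a - ψ b| = dist a b ^ β) ∧
      ψ '' closedBall y R = Set.Icc (-(R ^ β)) (R ^ β)) :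
    ∃ Φ : Y → ℝ, Φ y = 0 ∧ Function.Surjective Φ ∧
      ∀ a b : Y, |Φ a - Φ b| = dist a b ^ β := by
  haveI : Nonempty Y := ⟨y⟩
  have hβ' : 0 < β⁻¹ := inv_pos.2 hβ
  have H' : ∀ R : ℝ, ∃ ψ : Y → ℝ, 0 < R →
      (∀ a ∈ closedBall y R, ∀ b ∈ closedBall y R, |ψ a - ψ b| = dist a b ^ β) ∧
      ψ '' closedBall y R = Set.Icc (-(R ^ β)) (R ^ β) := by
    intro R
    by_cases hR : 0 < R
    · obtain ⟨ψ, h1, h2⟩ := H R hR; exact ⟨ψ, fun _ => ⟨h1, h2⟩⟩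
    · exact ⟨fun _ => 0, fun hR' => absurd hR' hR⟩
  choose ψ hψ using H'
  have hd : ∀ R, 0 < R → ∀ a ∈ closedBall y R, ∀ b ∈ closedBall y R,
      |ψ R a - ψ R b| = dist a b ^ β := fun R hR => (hψ R hR).1
  have hi : ∀ R, 0 < R → ψ R '' closedBall y R = Set.Icc (-(R ^ β)) (R ^ β) :=
    fun R hR => (hψ R hR).2
  have hrec : ∀ a b : Y, (dist a b ^ β) ^ β⁻¹ = dist a b := by
    intro a b
    rw [← Real.rpow_mul dist_nonneg, mul_inv_cancel₀ hβ.ne', Real.rpow_one]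
  -- injectivity of ψ R on the ball
  have hinj : ∀ r, 0 < r → ∀ b ∈ closedBall y r, ∀ c ∈ closedBall y r,
      ψ r b = ψ r c → b = c := by
    intro r hr b hb c hc hbc
    have h1 := hd r hr b hb c hc
    rw [hbc, sub_self, abs_zero] at h1
    have h2 : dist b c = 0 := by
      rw [← hrec b c, ← h1, Real.zero_rpow (inv_ne_zero hβ.ne')]
    exact dist_eq_zero.1 h2
  -- key bound on the center
  have key : ∀ R, 0 < R → ∀ r, 0 < r → r < R → |ψ R y| ≤ R ^ β - r ^ β := by
    intro R hR r hr hrR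
    have hyR : y ∈ closedBall y R := mem_closedBall_self hR.le
    have hsub : closedBall y r ⊆ closedBall y R := closedBall_subset_closedBall hrR.le
    have hl0 : (0:ℝ) ≤ r ^ β := Real.rpow_nonneg hr.le β
    have hsurj : ∀ t ∈ Set.Icc (-(r ^ β)) (r ^ β), ∃ a, a ∈ closedBall y r ∧ ψ r a = t := by
      intro t ht
      rw [← hi r hr] at ht
      obtain ⟨a, ha, hav⟩ := ht
      exact ⟨a, ha, hav⟩
    choose! aa ham hav using hsurj
    have huu : ∀ s ∈ Set.Icc (-(r ^ β)) (r ^ β), ∀ t ∈ Set.Icc (-(r ^ β)) (r ^ β),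
        |ψ R (aa s) - ψ R (aa t)| = |s - t| := by
      intro s hs t ht
      have h1 := hd R hR (aa s) (hsub (ham s hs)) (aa t) (hsub (ham t ht))
      have h2 := hd r hr (aa s) (ham s hs) (aa t) (ham t ht)
      rw [hav s hs, hav t ht] at h2
      rw [h1, ← h2]
    have hml : -(r ^ β) ∈ Set.Icc (-(r ^ β)) (r ^ β) := ⟨le_rfl, by linarith⟩
    have hpl : (r ^ β) ∈ Set.Icc (-(r ^ β)) (r ^ β) := ⟨by linarith, le_rfl⟩
    have h0mem : (0:ℝ) ∈ Set.Icc (-(r ^ β)) (r ^ β) := ⟨by linarith, hl0⟩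
    have hbound : ∀ t ∈ Set.Icc (-(r ^ β)) (r ^ β), |ψ R (aa t) - ψ R y| ≤ r ^ β := by
      intro t ht
      have h1 := hd R hR (aa t) (hsub (ham t ht)) y hyR
      have h2 : dist (aa t) y ≤ r := mem_closedBall.1 (ham t ht)
      rw [h1]
      exact Real.rpow_le_rpow dist_nonneg h2 hβ.le
    have hIccmem : ∀ t ∈ Set.Icc (-(r ^ β)) (r ^ β),
        ψ R (aa t) ∈ Set.Icc (-(R ^ β)) (R ^ β) := by
      intro t ht
      rw [← hi R hR]
      exact ⟨aa t, hsub (ham t ht), rfl⟩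
    have hex : (∃ s ∈ Set.Icc (-(r ^ β)) (r ^ β), ψ R (aa s) = ψ R (aa 0) + r ^ β) ∧
        (∃ s ∈ Set.Icc (-(r ^ β)) (r ^ β), ψ R (aa s) = ψ R (aa 0) - r ^ β) := by
      rcases rigid_interval hl0 (fun t => ψ R (aa t)) huu with h | h
      · have e1 : ψ R (aa (r ^ β)) = ψ R (aa 0) + r ^ β := h _ hpl
        have e2 : ψ R (aa (-(r ^ β))) = ψ R (aa 0) + -(r ^ β) := h _ hml
        exact ⟨⟨r ^ β, hpl, e1⟩, ⟨-(r ^ β), hml, by linarith⟩⟩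
      · have e1 : ψ R (aa (r ^ β)) = ψ R (aa 0) - r ^ β := h _ hpl
        have e2 : ψ R (aa (-(r ^ β))) = ψ R (aa 0) - -(r ^ β) := h _ hml
        exact ⟨⟨-(r ^ β), hml, by linarith⟩, ⟨r ^ β, hpl, e1⟩⟩
    obtain ⟨⟨sp, hsp, hup⟩, ⟨sm, hsm, hum⟩⟩ := hex
    have hb1 := hbound sp hsp
    have hb2 := hbound sm hsm
    rw [hup] at hb1
    rw [hum] at hb2
    have hm1 := hIccmem sp hsp
    have hm2 := hIccmem sm hsm
    rw [hup] at hm1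
    rw [hum] at hm2
    have habs1 := abs_le.1 hb1
    have habs2 := abs_le.1 hb2
    have hcq : ψ R (aa 0) = ψ R y := by linarith [habs1.2, habs2.1]
    rw [hcq] at hm1 hm2
    exact abs_le.2 ⟨by linarith [hm2.1], by linarith [hm1.2]⟩
  -- the center goes to 0
  have center : ∀ R, 0 < R → ψ R y = 0 := by
    intro R hR
    by_contra hq
    have hq' : 0 < |ψ R y| := abs_pos.2 hq
    have hL : |ψ R y| < R ^ β := by
      have h1 := key R hR (R / 2) (by linarith) (by linarith)
      have h2 : (0:ℝ) < (R / 2) ^ β := Real.rpow_pos_of_pos (by linarith) β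
      linarith
    have hl1 : 0 < R ^ β - |ψ R y| / 2 := by linarith
    have hl2 : R ^ β - |ψ R y| / 2 < R ^ β := by linarith
    have hr0 : 0 < (R ^ β - |ψ R y| / 2) ^ β⁻¹ := Real.rpow_pos_of_pos hl1 _
    have hrR : (R ^ β - |ψ R y| / 2) ^ β⁻¹ < R := by
      have h3 : (R ^ β - |ψ R y| / 2) ^ β⁻¹ < (R ^ β) ^ β⁻¹ :=
        Real.rpow_lt_rpow hl1.le hl2 hβ'
      rwa [← Real.rpow_mul hR.le, mul_inv_cancel₀ hβ.ne', Real.rpow_one] at h3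
    have hrβ : ((R ^ β - |ψ R y| / 2) ^ β⁻¹) ^ β = R ^ β - |ψ R y| / 2 := by
      rw [← Real.rpow_mul hl1.le, inv_mul_cancel₀ hβ.ne', Real.rpow_one]
    have h4 := key R hR _ hr0 hrR
    rw [hrβ] at h4
    linarith
  -- comparison of two radii
  have comp : ∀ R R', 0 < R → R ≤ R' →
      (∀ b ∈ closedBall y R, ψ R' b = ψ R b) ∨
      (∀ b ∈ closedBall y R, ψ R' b = -(ψ R b)) := by
    intro R R' hR hRR'
    have hR' : 0 < R' := lt_of_lt_of_le hR hRR'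
    have hsub : closedBall y R ⊆ closedBall y R' := closedBall_subset_closedBall hRR'
    have hL0 : (0:ℝ) ≤ R ^ β := Real.rpow_nonneg hR.le β
    have hsurj : ∀ t ∈ Set.Icc (-(R ^ β)) (R ^ β), ∃ a, a ∈ closedBall y R ∧ ψ R a = t := by
      intro t ht
      rw [← hi R hR] at ht
      obtain ⟨a, ha, hav⟩ := ht
      exact ⟨a, ha, hav⟩
    choose! aa ham hav using hsurj
    have huu : ∀ s ∈ Set.Icc (-(R ^ β)) (R ^ β), ∀ t ∈ Set.Icc (-(R ^ β)) (R ^ β),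
        |ψ R' (aa s) - ψ R' (aa t)| = |s - t| := by
      intro s hs t ht
      have h1 := hd R' hR' (aa s) (hsub (ham s hs)) (aa t) (hsub (ham t ht))
      have h2 := hd R hR (aa s) (ham s hs) (aa t) (ham t ht)
      rw [hav s hs, hav t ht] at h2
      rw [h1, ← h2]
    have h0mem : (0:ℝ) ∈ Set.Icc (-(R ^ β)) (R ^ β) := ⟨by linarith, hL0⟩
    have ha0 : aa 0 = y := by
      apply hinj R hR (aa 0) (ham 0 h0mem) y (mem_closedBall_self hR.le)
      rw [hav 0 h0mem, center R hR]
    have hu0 : ψ R' (aa 0) = 0 := by rw [ha0, center R' hR']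
    have hmemb : ∀ b ∈ closedBall y R, ψ R b ∈ Set.Icc (-(R ^ β)) (R ^ β) := by
      intro b hb
      rw [← hi R hR]
      exact ⟨b, hb, rfl⟩
    have haab : ∀ b ∈ closedBall y R, aa (ψ R b) = b := by
      intro b hb
      exact hinj R hR _ (ham _ (hmemb b hb)) b hb (hav _ (hmemb b hb))
    rcases rigid_interval hL0 (fun t => ψ R' (aa t)) huu with h | h
    · left
      intro b hb
      have h3 : ψ R' (aa (ψ R b)) = ψ R' (aa 0) + ψ R b := h _ (hmemb b hb)
      rw [haab b hb, hu0, zero_add] at h3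
      exact h3
    · right
      intro b hb
      have h3 : ψ R' (aa (ψ R b)) = ψ R' (aa 0) - ψ R b := h _ (hmemb b hb)
      rw [haab b hb, hu0, zero_sub] at h3
      exact h3
  -- a reference point at distance 1
  have hz₁ : ∃ z, z ∈ closedBall y 1 ∧ ψ 1 z = 1 := by
    have h1 : (1:ℝ) ∈ Set.Icc (-((1:ℝ) ^ β)) ((1:ℝ) ^ β) := by
      rw [Real.one_rpow]
      exact ⟨by norm_num, le_rfl⟩
    rw [← hi 1 one_pos] at h1
    obtain ⟨z, hz, hzv⟩ := h1
    exact ⟨z, hz, hzv⟩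
  obtain ⟨z₁, hz₁mem, hz₁val⟩ := hz₁
  have hρz : dist z₁ y ^ β = 1 := by
    have h1 := hd 1 one_pos z₁ hz₁mem y (mem_closedBall_self one_pos.le)
    rw [hz₁val, center 1 one_pos, sub_zero, abs_one] at h1
    exact h1.symm
  have hdz : dist z₁ y = 1 := by
    rw [← hrec z₁ y, hρz, Real.one_rpow]
  have hz₁R : ∀ R, 1 ≤ R → z₁ ∈ closedBall y R := by
    intro R hR
    rw [mem_closedBall, hdz]
    exact hR
  have habsz : ∀ R, 1 ≤ R → |ψ R z₁| = 1 := by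
    intro R hR
    have hR0 : (0:ℝ) < R := lt_of_lt_of_le one_pos hR
    have h1 := hd R hR0 z₁ (hz₁R R hR) y (mem_closedBall_self hR0.le)
    rw [center R hR0, sub_zero] at h1
    rw [h1, hρz]
  -- the sign-normalized coordinate
  set φ : ℝ → Y → ℝ := fun R b => if 0 < ψ R z₁ then ψ R b else -(ψ R b) with hφdef
  have φd : ∀ R, 0 < R → ∀ a ∈ closedBall y R, ∀ b ∈ closedBall y R,
      |φ R a - φ R b| = dist a b ^ β := by
    intro R hR a ha b hb
    by_cases hc : 0 < ψ R z₁
    · simp only [hφdef, if_pos hc]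
      exact hd R hR a ha b hb
    · simp only [hφdef, if_neg hc]
      rw [show -(ψ R a) - -(ψ R b) = -(ψ R a - ψ R b) by ring, abs_neg]
      exact hd R hR a ha b hb
  have φy : ∀ R, 0 < R → φ R y = 0 := by
    intro R hR
    by_cases hc : 0 < ψ R z₁
    · simp only [hφdef, if_pos hc]; exact center R hR
    · simp only [hφdef, if_neg hc]; rw [center R hR]; ring
  have φsurj : ∀ R, 0 < R → ∀ t ∈ Set.Icc (-(R ^ β)) (R ^ β),
      ∃ b ∈ closedBall y R, φ R b = t := by
    intro R hR t ht
    by_cases hc : 0 < ψ R z₁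
    · have h1 : t ∈ ψ R '' closedBall y R := by rw [hi R hR]; exact ht
      obtain ⟨b, hb, hbv⟩ := h1
      refine ⟨b, hb, ?_⟩
      simp only [hφdef, if_pos hc]
      exact hbv
    · have h1 : -t ∈ ψ R '' closedBall y R := by
        rw [hi R hR]
        exact ⟨by linarith [ht.2], by linarith [ht.1]⟩
      obtain ⟨b, hb, hbv⟩ := h1
      refine ⟨b, hb, ?_⟩
      simp only [hφdef, if_neg hc]
      rw [hbv]; ring
  have φcomp : ∀ R R', 1 ≤ R → R ≤ R' → ∀ b ∈ closedBall y R, φ R' b = φ R b := by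
    intro R R' h1R hRR' b hb
    have hR : (0:ℝ) < R := lt_of_lt_of_le one_pos h1R
    have h1R' : 1 ≤ R' := le_trans h1R hRR'
    have hz := hz₁R R h1R
    rcases comp R R' hR hRR' with h | h
    · have hcz : ψ R' z₁ = ψ R z₁ := h z₁ hz
      simp only [hφdef, hcz, h b hb]
    · have hcz : ψ R' z₁ = -(ψ R z₁) := h z₁ hz
      rcases (abs_eq (by norm_num : (0:ℝ) ≤ 1)).1 (habsz R h1R) with hv | hv
      · simp only [hφdef]
        rw [if_pos (by rw [hv]; norm_num : 0 < ψ R z₁),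
          if_neg (by rw [hcz, hv]; norm_num : ¬ 0 < ψ R' z₁), h b hb]
        ring
      · simp only [hφdef]
        rw [if_neg (by rw [hv]; norm_num : ¬ 0 < ψ R z₁),
          if_pos (by rw [hcz, hv]; norm_num : 0 < ψ R' z₁), h b hb]
  -- globalize
  have hwmem : ∀ w : Y, w ∈ closedBall y (1 + dist y w) := by
    intro w
    rw [mem_closedBall, dist_comm]
    linarith [dist_nonneg (x := y) (y := w)]
  have h1le : ∀ w : Y, 1 ≤ 1 + dist y w := by
    intro w
    linarith [dist_nonneg (x := y) (y := w)]
  have hΦeq : ∀ (w : Y) (R : ℝ), 1 ≤ R → w ∈ closedBall y R →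
      φ (1 + dist y w) w = φ R w := by
    intro w R hR hw
    have h1 := φcomp (1 + dist y w) (max R (1 + dist y w)) (h1le w) (le_max_right _ _)
      w (hwmem w)
    have h2 := φcomp R (max R (1 + dist y w)) hR (le_max_left _ _) w hw
    rw [← h1]; exact h2
  refine ⟨fun w => φ (1 + dist y w) w, ?_, ?_, ?_⟩
  · show φ (1 + dist y y) y = 0
    rw [dist_self, add_zero]
    exact φy 1 one_pos
  · intro t
    have hR1 : 1 ≤ 1 + |t| ^ β⁻¹ := by
      linarith [Real.rpow_nonneg (abs_nonneg t) β⁻¹]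
    have hR0 : (0:ℝ) < 1 + |t| ^ β⁻¹ := lt_of_lt_of_le one_pos hR1
    have htmem : t ∈ Set.Icc (-((1 + |t| ^ β⁻¹) ^ β)) ((1 + |t| ^ β⁻¹) ^ β) := by
      have h1 : |t| ≤ (1 + |t| ^ β⁻¹) ^ β := by
        calc |t| = (|t| ^ β⁻¹) ^ β := by
              rw [← Real.rpow_mul (abs_nonneg t), inv_mul_cancel₀ hβ.ne', Real.rpow_one]
          _ ≤ (1 + |t| ^ β⁻¹) ^ β :=
              Real.rpow_le_rpow (Real.rpow_nonneg (abs_nonneg t) _) (by linarith) hβ.le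
      have h2 := abs_le.1 h1
      exact ⟨h2.1, h2.2⟩
    obtain ⟨b, hbmem, hbv⟩ := φsurj _ hR0 t htmem
    refine ⟨b, ?_⟩
    show φ (1 + dist y b) b = t
    rw [hΦeq b _ hR1 hbmem]
    exact hbv
  · intro a b
    have hR1 : 1 ≤ 1 + dist y a + dist y b := by
      linarith [dist_nonneg (x := y) (y := a), dist_nonneg (x := y) (y := b)]
    have ha : a ∈ closedBall y (1 + dist y a + dist y b) := by
      rw [mem_closedBall, dist_comm]
      linarith [dist_nonneg (x := y) (y := b)]
    have hb : b ∈ closedBall y (1 + dist y a + dist y b) := by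
      rw [mem_closedBall, dist_comm]
      linarith [dist_nonneg (x := y) (y := a)]
    show |φ (1 + dist y a) a - φ (1 + dist y b) b| = dist a b ^ β
    rw [hΦeq a _ hR1 ha, hΦeq b _ hR1 hb]
    exact φd _ (lt_of_lt_of_le one_pos hR1) a ha b hb

/-- Fix `α ∈ (0, 1)` and equip `ℝ` with the snowflake distance
`d_α(x, y) = |x − y| ^ α`. For every `p ∈ ℝ`, the pointed space `((ℝ, d_α), 0)` is a tangent
of `(ℝ, d_α)` at `p`, and every proper tangent `(Y, y)` of `(ℝ, d_α)` at `p` is pointed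
isometric to `((ℝ, d_α), 0)`: the snowflaked line has a unique tangent at every point, equal
to itself. -/
theorem tangent_of_snowflake (α : ℝ) (h0 : 0 < α) (h1 : α < 1) :
    letI : MetricSpace (Snowflake α) := snowflakeMetricSpace α h0 h1
    ∀ p : Snowflake α,
      IsTangentAt p (Snowflake α) (Snowflake.ofReal α 0) ∧
        ∀ (Y : Type v) [MetricSpace Y] [ProperSpace Y] (y : Y),
          IsTangentAt p Y y → PointedIsometric y (Snowflake.ofReal α 0) := by
  letI : MetricSpace (Snowflake α) := snowflakeMetricSpace α h0 h1
  have hα : α ≠ 0 := h0.ne'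
  have hβ : 0 < α⁻¹ := inv_pos.2 h0
  have hdist : ∀ a b : Snowflake α, dist a b = |a.toReal - b.toReal| ^ α := fun _ _ => rfl
  have hpow1 : ∀ x : ℝ, 0 ≤ x → (x ^ α) ^ α⁻¹ = x := fun x hx => by
    rw [← Real.rpow_mul hx, mul_inv_cancel₀ hα, Real.rpow_one]
  have hpow2 : ∀ x : ℝ, 0 ≤ x → (x ^ α⁻¹) ^ α = x := fun x hx => by
    rw [← Real.rpow_mul hx, inv_mul_cancel₀ hα, Real.rpow_one]
  have hmem_iff : ∀ (c : Snowflake α) (R : ℝ), 0 ≤ R → ∀ x : Snowflake α,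
      (x ∈ closedBall c R ↔ |x.toReal - c.toReal| ≤ R ^ α⁻¹) := by
    intro c R hR x
    rw [mem_closedBall, hdist]
    constructor
    · intro h
      calc |x.toReal - c.toReal| = (|x.toReal - c.toReal| ^ α) ^ α⁻¹ :=
            (hpow1 _ (abs_nonneg _)).symm
        _ ≤ R ^ α⁻¹ := Real.rpow_le_rpow (Real.rpow_nonneg (abs_nonneg _) _) h hβ.le
    · intro h
      calc |x.toReal - c.toReal| ^ α ≤ (R ^ α⁻¹) ^ α :=
            Real.rpow_le_rpow (abs_nonneg _) h h0.le
        _ = R := hpow2 R hR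
  intro p
  constructor
  · -- existence of the tangent
    refine ⟨fun j => (j : ℝ) + 1, fun j => by positivity, ?_, ?_⟩
    · exact tendsto_atTop_add_const_right _ 1 tendsto_natCast_atTop_atTop
    · intro R hR ε hε
      refine Eventually.of_forall fun j => ?_
      set l : ℝ := (j : ℝ) + 1 with hldef
      have hl : 0 < l := by positivity
      have hlβ : 0 < l ^ α⁻¹ := Real.rpow_pos_of_pos hl _
      refine ⟨Snowflake α, inferInstance,
        fun a => Snowflake.ofReal α (l ^ α⁻¹ * (a.toReal - p.toReal)), id, ?_, ?_, ?_⟩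
      · intro a _ b _
        rw [hdist, hdist]
        have he : (Snowflake.ofReal α (l ^ α⁻¹ * (a.toReal - p.toReal))).toReal -
            (Snowflake.ofReal α (l ^ α⁻¹ * (b.toReal - p.toReal))).toReal =
            l ^ α⁻¹ * (a.toReal - b.toReal) := by
          show l ^ α⁻¹ * (a.toReal - p.toReal) - l ^ α⁻¹ * (b.toReal - p.toReal) = _
          ring
        rw [he, abs_mul, abs_of_nonneg hlβ.le, Real.mul_rpow hlβ.le (abs_nonneg _),
          hpow2 l hl.le]
      · intro a _ b _; rfl
      · have himg : (fun a : Snowflake α =>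
            Snowflake.ofReal α (l ^ α⁻¹ * (a.toReal - p.toReal))) ''
            closedBall p (R / l) = closedBall (Snowflake.ofReal α 0) R := by
          ext x
          constructor
          · rintro ⟨a, ha, rfl⟩
            rw [hmem_iff _ R hR.le]
            have ha' := (hmem_iff p (R / l) (div_nonneg hR.le hl.le) a).1 ha
            show |l ^ α⁻¹ * (a.toReal - p.toReal) - 0| ≤ R ^ α⁻¹
            rw [sub_zero, abs_mul, abs_of_nonneg hlβ.le]
            calc l ^ α⁻¹ * |a.toReal - p.toReal| ≤ l ^ α⁻¹ * (R / l) ^ α⁻¹ :=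
                mul_le_mul_of_nonneg_left ha' hlβ.le
              _ = R ^ α⁻¹ := by
                rw [← Real.mul_rpow hl.le (div_nonneg hR.le hl.le), mul_comm,
                  div_mul_cancel₀ _ hl.ne']
          · intro hx
            have hx'0 := (hmem_iff _ R hR.le x).1 hx
            have hx' : |x.toReal - 0| ≤ R ^ α⁻¹ := hx'0
            rw [sub_zero] at hx'
            refine ⟨Snowflake.ofReal α (p.toReal + x.toReal / l ^ α⁻¹), ?_, ?_⟩
            · rw [hmem_iff p (R / l) (div_nonneg hR.le hl.le)]
              show |p.toReal + x.toReal / l ^ α⁻¹ - p.toReal| ≤ (R / l) ^ α⁻¹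
              rw [add_sub_cancel_left, abs_div, abs_of_nonneg hlβ.le,
                Real.div_rpow hR.le hl.le]
              gcongr
            · have he : l ^ α⁻¹ *
                  ((Snowflake.ofReal α (p.toReal + x.toReal / l ^ α⁻¹)).toReal - p.toReal) =
                  x.toReal := by
                show l ^ α⁻¹ * ((p.toReal + x.toReal / l ^ α⁻¹) - p.toReal) = x.toReal
                field_simp
                ring
              show Snowflake.ofReal α (l ^ α⁻¹ *
                ((Snowflake.ofReal α (p.toReal + x.toReal / l ^ α⁻¹)).toReal - p.toReal)) = x
              rw [he]
              rfl
        rw [himg, Set.image_id, hausdorffDist_self_zero]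
        exact hε
  · -- uniqueness of the tangent
    intro Y _ _ y hT
    obtain ⟨lam, hpos, _, hcl⟩ := hT
    have hcont : Continuous (Snowflake.ofReal α) := by
      rw [Metric.continuous_iff]
      intro b ε hε
      refine ⟨ε ^ α⁻¹, Real.rpow_pos_of_pos hε _, fun a hab => ?_⟩
      rw [Real.dist_eq] at hab
      rw [hdist]
      show |a - b| ^ α < ε
      calc |a - b| ^ α < (ε ^ α⁻¹) ^ α := Real.rpow_lt_rpow (abs_nonneg _) hab h0
        _ = ε := hpow2 ε hε.le
    have hscompact : ∀ R : ℝ, 0 ≤ R → IsCompact (closedBall (Snowflake.ofReal α 0) R) := by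
      intro R hR
      have himg : Snowflake.ofReal α '' Set.Icc (-(R ^ α⁻¹)) (R ^ α⁻¹) =
          closedBall (Snowflake.ofReal α 0) R := by
        ext x
        rw [hmem_iff _ R hR]
        constructor
        · rintro ⟨t, ht, rfl⟩
          show |t - 0| ≤ R ^ α⁻¹
          rw [sub_zero]
          exact abs_le.2 ⟨ht.1, ht.2⟩
        · intro hx
          have hx2 : |x.toReal - 0| ≤ R ^ α⁻¹ := hx
          rw [sub_zero] at hx2
          exact ⟨x.toReal, ⟨(abs_le.1 hx2).1, (abs_le.1 hx2).2⟩, rfl⟩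
      rw [← himg]
      exact isCompact_Icc.image hcont
    have HH : ∀ R > (0:ℝ), ∃ ψ : Y → ℝ,
        (∀ a ∈ closedBall y R, ∀ b ∈ closedBall y R, |ψ a - ψ b| = dist a b ^ α⁻¹) ∧
        ψ '' closedBall y R = Set.Icc (-(R ^ α⁻¹)) (R ^ α⁻¹) := by
      intro R hR
      letI : CompactSpace (closedBall (Snowflake.ofReal α 0) R : Set (Snowflake α)) :=
        isCompact_iff_compactSpace.1 (hscompact R hR.le)
      letI : CompactSpace (closedBall y R : Set Y) :=
        isCompact_iff_compactSpace.1 (isCompact_closedBall y R)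
      haveI : Nonempty (closedBall (Snowflake.ofReal α 0) R : Set (Snowflake α)) :=
        ⟨⟨_, mem_closedBall_self hR.le⟩⟩
      haveI : Nonempty (closedBall y R : Set Y) := ⟨⟨y, mem_closedBall_self hR.le⟩⟩
      have hne : Nonempty ((closedBall (Snowflake.ofReal α 0) R : Set (Snowflake α)) ≃ᵢ
          (closedBall y R : Set Y)) := by
        apply isometryEquiv_of_ghclose
        intro ε hε
        obtain ⟨j, hj⟩ := (hcl R hR ε hε).exists
        obtain ⟨Z, instZ, f, g, hf, hg, hH⟩ := hj
        have hl : 0 < lam j := hpos j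
        have hlβ : 0 < lam j ^ α⁻¹ := Real.rpow_pos_of_pos hl _
        set T : Snowflake α → Snowflake α :=
          fun z => Snowflake.ofReal α (p.toReal + z.toReal / lam j ^ α⁻¹) with hTdef
        have hTdist : ∀ z w : Snowflake α, dist (T z) (T w) = dist z w / lam j := by
          intro z w
          rw [hdist, hdist]
          have he : (T z).toReal - (T w).toReal = (z.toReal - w.toReal) / lam j ^ α⁻¹ := by
            show (p.toReal + z.toReal / lam j ^ α⁻¹) -
              (p.toReal + w.toReal / lam j ^ α⁻¹) = _
            ring
          rw [he, abs_div, abs_of_nonneg hlβ.le, Real.div_rpow (abs_nonneg _) hlβ.le,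
            hpow2 _ hl.le]
        have hTmem : ∀ z ∈ closedBall (Snowflake.ofReal α 0) R,
            T z ∈ closedBall p (R / lam j) := by
          intro z hz
          have hz'0 := (hmem_iff _ R hR.le z).1 hz
          have hz' : |z.toReal - 0| ≤ R ^ α⁻¹ := hz'0
          rw [sub_zero] at hz'
          rw [hmem_iff p (R / lam j) (div_nonneg hR.le hl.le)]
          show |p.toReal + z.toReal / lam j ^ α⁻¹ - p.toReal| ≤ (R / lam j) ^ α⁻¹
          rw [add_sub_cancel_left, abs_div, abs_of_nonneg hlβ.le,
            Real.div_rpow hR.le hl.le]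
          gcongr
        have hTimg : T '' closedBall (Snowflake.ofReal α 0) R = closedBall p (R / lam j) := by
          apply Set.Subset.antisymm
          · rintro _ ⟨z, hz, rfl⟩
            exact hTmem z hz
          · intro a ha
            refine ⟨Snowflake.ofReal α (lam j ^ α⁻¹ * (a.toReal - p.toReal)), ?_, ?_⟩
            · rw [hmem_iff _ R hR.le]
              show |lam j ^ α⁻¹ * (a.toReal - p.toReal) - 0| ≤ R ^ α⁻¹
              rw [sub_zero, abs_mul, abs_of_nonneg hlβ.le]
              have ha' := (hmem_iff p (R / lam j) (div_nonneg hR.le hl.le) a).1 ha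
              calc lam j ^ α⁻¹ * |a.toReal - p.toReal| ≤
                  lam j ^ α⁻¹ * (R / lam j) ^ α⁻¹ :=
                    mul_le_mul_of_nonneg_left ha' hlβ.le
                _ = R ^ α⁻¹ := by
                  rw [← Real.mul_rpow hl.le (div_nonneg hR.le hl.le), mul_comm,
                    div_mul_cancel₀ _ hl.ne']
            · show Snowflake.ofReal α (p.toReal +
                (Snowflake.ofReal α (lam j ^ α⁻¹ * (a.toReal - p.toReal))).toReal /
                  lam j ^ α⁻¹) = a
              have he : p.toReal + (lam j ^ α⁻¹ * (a.toReal - p.toReal)) / lam j ^ α⁻¹ =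
                  a.toReal := by field_simp; ring
              show Snowflake.ofReal α (p.toReal +
                (lam j ^ α⁻¹ * (a.toReal - p.toReal)) / lam j ^ α⁻¹) = a
              rw [he]
              rfl
        refine ⟨Z, instZ, fun z => f (T z.val), fun b => g b.val, ?_, ?_, ?_⟩
        · apply Isometry.of_dist_eq
          intro z w
          rw [Subtype.dist_eq, hf (T z.val) (hTmem _ z.prop) (T w.val) (hTmem _ w.prop),
            hTdist]
          field_simp
        · apply Isometry.of_dist_eq
          intro a b
          rw [Subtype.dist_eq, hg a.val a.prop b.val b.prop]
        · have hr1 : Set.range (fun z : (closedBall (Snowflake.ofReal α 0) R :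
              Set (Snowflake α)) => f (T z.val)) = f '' closedBall p (R / lam j) := by
            ext w
            simp only [Set.mem_range, Set.mem_image]
            constructor
            · rintro ⟨z, rfl⟩
              exact ⟨T z.val, hTmem _ z.prop, rfl⟩
            · rintro ⟨a, ha, rfl⟩
              rw [← hTimg] at ha
              obtain ⟨z, hz, rfl⟩ := ha
              exact ⟨⟨z, hz⟩, rfl⟩
          have hr2 : Set.range (fun b : (closedBall y R : Set Y) => g b.val) =
              g '' closedBall y R := by
            ext w
            simp only [Set.mem_range, Set.mem_image]
            constructor
            · rintro ⟨b, rfl⟩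
              exact ⟨b.val, b.prop, rfl⟩
            · rintro ⟨a, ha, rfl⟩
              exact ⟨⟨a, ha⟩, rfl⟩
          rw [hr1, hr2]
          exact hH
      obtain ⟨E⟩ := hne
      classical
      refine ⟨fun w => if h : w ∈ closedBall y R then (E.symm ⟨w, h⟩).val.toReal else 0,
        ?_, ?_⟩
      · intro a ha b hb
        beta_reduce
        rw [dif_pos ha, dif_pos hb]
        have hE : dist (E.symm ⟨a, ha⟩).val (E.symm ⟨b, hb⟩).val = dist a b := by
          rw [← Subtype.dist_eq, IsometryEquiv.dist_eq, Subtype.dist_eq]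
        rw [hdist] at hE
        rw [← hE, hpow1 _ (abs_nonneg _)]
      · apply Set.Subset.antisymm
        · rintro _ ⟨a, ha, rfl⟩
          beta_reduce
          rw [dif_pos ha]
          have hmem := (E.symm ⟨a, ha⟩).prop
          have h20 := (hmem_iff _ R hR.le _).1 hmem
          have h2 : |(E.symm ⟨a, ha⟩).val.toReal - 0| ≤ R ^ α⁻¹ := h20
          rw [sub_zero] at h2
          exact ⟨(abs_le.1 h2).1, (abs_le.1 h2).2⟩
        · intro t ht
          have htS : Snowflake.ofReal α t ∈ closedBall (Snowflake.ofReal α 0) R := by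
            rw [hmem_iff _ R hR.le]
            show |t - 0| ≤ R ^ α⁻¹
            rw [sub_zero]
            exact abs_le.2 ⟨ht.1, ht.2⟩
          refine ⟨(E ⟨Snowflake.ofReal α t, htS⟩).val, (E ⟨Snowflake.ofReal α t, htS⟩).prop,
            ?_⟩
          beta_reduce
          rw [dif_pos (E ⟨Snowflake.ofReal α t, htS⟩).prop]
          have h2 : E.symm (E ⟨Snowflake.ofReal α t, htS⟩) = ⟨Snowflake.ofReal α t, htS⟩ :=
            E.symm_apply_apply _
          calc (E.symm ⟨(E ⟨Snowflake.ofReal α t, htS⟩).val,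
                (E ⟨Snowflake.ofReal α t, htS⟩).prop⟩).val.toReal
              = (E.symm (E ⟨Snowflake.ofReal α t, htS⟩)).val.toReal := rfl
            _ = t := by rw [h2]; rfl
    obtain ⟨Φ, hΦy, hΦsurj, hΦd⟩ := snow_glue y α⁻¹ hβ HH
    refine ⟨fun w => Snowflake.ofReal α (Φ w), ?_, ?_, ?_⟩
    · apply Isometry.of_dist_eq
      intro a b
      rw [hdist]
      show |Φ a - Φ b| ^ α = dist a b
      rw [hΦd a b, hpow2 _ dist_nonneg]
    · intro t
      obtain ⟨w, hw⟩ := hΦsurj t.toReal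
      refine ⟨w, ?_⟩
      show Snowflake.ofReal α (Φ w) = t
      rw [hw]
      rfl
    · show Snowflake.ofReal α (Φ y) = Snowflake.ofReal α 0
      rw [hΦy]
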